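/- A polynomial vector field X(z) = P(z) ∂/∂z on ℂ is complete (all complex-time trajectories defined for all time) if and only if deg P ≤ 1. -/

import Mathlib

open Polynomial Finset Filter Set Topology

lemma poly_eval_bound (Q : Polynomial ℂ) :
    ∃ C : ℝ, 0 ≤ C ∧ ∀ z : ℂ, 1 ≤ ‖z‖ → ‖Q.eval z‖ ≤ C * ‖z‖ ^ Q.natDegree := by
  refine ⟨∑ i ∈ range (Q.natDegree + 1), ‖Q.coeff i‖,
    Finset.sum_nonneg fun i _ => norm_nonneg _, fun z hz => ?_⟩
  rw [eval_eq_sum_range, Finset.sum_mul]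
  refine (norm_sum_le _ _).trans (Finset.sum_le_sum fun i hi => ?_)
  rw [norm_mul, norm_pow]
  have h1 : ‖z‖ ^ i ≤ ‖z‖ ^ Q.natDegree :=
    pow_le_pow_right₀ hz (by simpa using Nat.lt_succ_iff.mp (Finset.mem_range.mp hi))
  exact mul_le_mul_of_nonneg_left h1 (norm_nonneg _)

lemma tail_bound (P : Polynomial ℂ) (m : ℕ) (hm : P.natDegree = m + 2) :
    ∃ C : ℝ, 0 ≤ C ∧ ∀ z : ℂ, 1 ≤ ‖z‖ →
      ‖P.eval z - P.leadingCoeff * z ^ (m + 2)‖ ≤ C * ‖z‖ ^ (m + 1) := by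
  obtain ⟨C, hC0, hC⟩ := poly_eval_bound P.eraseLead
  refine ⟨C, hC0, fun z hz => ?_⟩
  have h1 : P.eraseLead.eval z = P.eval z - P.leadingCoeff * z ^ (m + 2) := by
    have h0 := congrArg (eval z) P.eraseLead_add_C_mul_X_pow
    simp only [eval_add, eval_mul, eval_C, eval_pow, eval_X, hm] at h0
    linear_combination h0
  have h2 : P.eraseLead.natDegree ≤ m + 1 := by
    have := P.eraseLead_natDegree_le
    omega
  calc ‖P.eval z - P.leadingCoeff * z ^ (m + 2)‖ = ‖P.eraseLead.eval z‖ := by rw [h1]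
    _ ≤ C * ‖z‖ ^ P.eraseLead.natDegree := hC z hz
    _ ≤ C * ‖z‖ ^ (m + 1) := by
        exact mul_le_mul_of_nonneg_left (pow_le_pow_right₀ hz h2) hC0


set_option maxHeartbeats 2000000 in
lemma step_lemma (P : Polynomial ℂ) (m : ℕ) (hm : P.natDegree = m + 2)
    (C₀ : ℝ) (hC₀ : 0 ≤ C₀)
    (htail : ∀ z : ℂ, 1 ≤ ‖z‖ →
      ‖P.eval z - P.leadingCoeff * z ^ (m + 2)‖ ≤ C₀ * ‖z‖ ^ (m + 1))
    (γ : ℂ → ℂ) (hγ : ∀ t : ℂ, HasDerivAt γ (P.eval (γ t)) t)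
    (t₀ : ℂ) (ht₀ : 30 * (C₀ / ‖P.leadingCoeff‖ + 1) * 2 ^ (m + 2) + 2 ≤ ‖γ t₀‖) :
    ∃ t₁ : ℂ, ‖t₁ - t₀‖ ≤ 1 / (‖P.leadingCoeff‖ * ‖γ t₀‖) ∧
      2 * ‖γ t₀‖ ≤ ‖γ t₁‖ := by
  have hP0 : P ≠ 0 := by
    intro h; rw [h] at hm; simp at hm
  set a := P.leadingCoeff with ha_def
  have ha : a ≠ 0 := leadingCoeff_ne_zero.mpr hP0
  have han : 0 < ‖a‖ := norm_pos_iff.mpr ha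
  set z₁ := γ t₀ with hz₁def
  set r := ‖z₁‖ with hr_def
  set K := C₀ / ‖a‖ + 1 with hK_def
  have hK1 : 1 ≤ K := by
    have h0 : 0 ≤ C₀ / ‖a‖ := div_nonneg hC₀ han.le
    rw [hK_def]; linarith
  have haK : C₀ ≤ ‖a‖ * K := by
    rw [hK_def, mul_add, mul_one, mul_div_cancel₀ _ han.ne']
    linarith
  have h2pow : (1:ℝ) ≤ 2 ^ (m + 2) := one_le_pow₀ (by norm_num)
  have hr : 30 * K * 2 ^ (m + 2) + 2 ≤ r := ht₀
  have hr2 : 2 ≤ r := by nlinarith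
  have hr0 : 0 < r := by linarith
  have hr1 : 1 ≤ r := by linarith
  have hz₁0 : z₁ ≠ 0 := by
    intro h; rw [hr_def, h] at hr0; simp at hr0
  set η := ((1:ℝ)/2) ^ (m + 2) with hη_def
  have hη0 : 0 < η := pow_pos (by norm_num) _
  have hη2 : η * 2 ^ (m + 2) = 1 := by
    rw [hη_def, ← mul_pow]; norm_num
  have hη4 : η ≤ 1/4 := by
    calc η ≤ ((1:ℝ)/2) ^ 2 := pow_le_pow_of_le_one (by norm_num) (by norm_num) (by omega)
      _ = 1/4 := by norm_num
  set δ := 3 * K / r with hδ_def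
  have hδ0 : 0 < δ := div_pos (by linarith) hr0
  have hδη : δ ≤ η := by
    rw [hδ_def, div_le_iff₀ hr0]
    have h1 : η * (30 * K * 2 ^ (m + 2)) ≤ η * r := by
      apply mul_le_mul_of_nonneg_left _ hη0.le
      linarith
    have h2 : η * (30 * K * 2 ^ (m + 2)) = 30 * K := by
      have h3 : η * (30 * K * 2 ^ (m + 2)) = 30 * K * (η * 2 ^ (m+2)) := by ring
      rw [h3, hη2, mul_one]
    nlinarith
  set μ := ((m : ℝ) + 1) * (‖a‖ * r ^ (m + 1)) with hμ_def
  have hμ0 : 0 < μ := by positivity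
  obtain ⟨e, hce, hkey⟩ : ∃ e : ℂ, ‖e‖ = 1 ∧
      ((m : ℂ) + 1) * z₁ ^ (m + 1) * a * e = (μ : ℂ) := by
    set c := a * z₁ ^ (m + 1) with hc_def
    have hc0 : c ≠ 0 := mul_ne_zero ha (pow_ne_zero _ hz₁0)
    have hcpos : 0 < ‖c‖ := norm_pos_iff.mpr hc0
    have hcne : (‖c‖ : ℂ) ≠ 0 := by exact_mod_cast hcpos.ne'
    refine ⟨(starRingEnd ℂ) c / (‖c‖ : ℂ), ?_, ?_⟩
    · rw [norm_div, RCLike.norm_conj, Complex.norm_real, Real.norm_eq_abs, abs_norm,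
        div_self (norm_ne_zero_iff.mpr hc0)]
    · have hmc : c * (starRingEnd ℂ) c = ((‖c‖ ^ 2 : ℝ) : ℂ) := by
        rw [Complex.mul_conj]
        norm_cast
        rw [Complex.normSq_eq_norm_sq]
      have hμc : μ = ((m:ℝ)+1) * ‖c‖ := by
        rw [hμ_def, hc_def, norm_mul, norm_pow, ← hr_def]
      rw [hμc]
      push_cast
      rw [div_eq_mul_inv, ← mul_assoc]
      rw [show ((m : ℂ) + 1) * z₁ ^ (m + 1) * a * ((starRingEnd ℂ) c) =
        ((m:ℂ)+1) * (c * (starRingEnd ℂ) c) from by rw [hc_def]; ring]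
      rw [hmc]
      push_cast
      have hA : ((‖c‖ : ℝ) : ℂ) ≠ 0 := by
        exact hcne
      field_simp
  set G : ℂ → ℂ := fun w => γ (t₀ + w * e) with hG_def
  have hG : ∀ w : ℂ, HasDerivAt G (P.eval (G w) * e) w := by
    intro w
    have hL : HasDerivAt (fun w : ℂ => t₀ + w * e) e w := by
      simpa using ((hasDerivAt_id w).mul_const e).const_add t₀
    exact (hγ (t₀ + w * e)).comp w hL
  have hGc : Continuous G := by
    rw [continuous_iff_continuousAt]
    exact fun w => (hG w).continuousAt
  have hG0 : G 0 = z₁ := by simp [hG_def]; rfl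
  set V : ℂ → ℂ := fun w => z₁ ^ (m + 1) / (G w) ^ (m + 1) + (μ : ℂ) * w with hV_def
  have hV0 : V 0 = 1 := by
    simp [hV_def, hG0, div_self (pow_ne_zero (m+1) hz₁0)]
  set DD : ℂ → ℂ := fun w =>
    -(((m : ℂ) + 1) * z₁ ^ (m + 1) * e * (P.eval (G w) - a * (G w) ^ (m + 2)) /
      (G w) ^ (m + 2)) with hDD_def
  have hVD : ∀ w : ℂ, G w ≠ 0 → HasDerivAt V (DD w) w := by
    intro w hGw
    have h2 : HasDerivAt (fun w => (G w) ^ (m + 1))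
        ((((m + 1 : ℕ)) : ℂ) * (G w) ^ m * (P.eval (G w) * e)) w := by
      simpa using (hG w).fun_pow (m + 1)
    have h3 := h2.inv (pow_ne_zero _ hGw)
    have h4 := (h3.const_mul (z₁ ^ (m + 1))).add ((hasDerivAt_id w).const_mul (μ : ℂ))
    have h5 : HasDerivAt V
        (z₁ ^ (m+1) * (-((((m + 1 : ℕ)) : ℂ) * (G w) ^ m * (P.eval (G w) * e)) /
          ((G w) ^ (m+1)) ^ 2) + (μ : ℂ) * 1) w := by
      rw [hV_def]
      simp only [div_eq_mul_inv]
      convert h4 using 2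
      · rfl
      · rfl
      · rfl
      · rw [div_eq_mul_inv]
    convert h5 using 1
    rw [hDD_def]
    have hgm2 : (G w) ^ (m + 2) ≠ 0 := pow_ne_zero _ hGw
    push_cast
    field_simp
    ring_nf
    linear_combination (norm := (push_cast [hμ_def]; ring1)) (G w)^(m*3+4) * hkey
  have hDbound : ∀ w : ℂ, r / 2 ≤ ‖G w‖ → ‖DD w‖ ≤ 2/3 * δ * μ := by
    intro w hgs
    have hg1 : (1:ℝ) ≤ ‖G w‖ := by linarith
    have hgpos : (0:ℝ) < ‖G w‖ := by linarith
    have hT := htail (G w) hg1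
    have hnorm : ‖DD w‖ = ((m:ℝ) + 1) * r ^ (m + 1) *
        ‖P.eval (G w) - a * (G w) ^ (m + 2)‖ / ‖G w‖ ^ (m + 2) := by
      rw [hDD_def]
      simp only [norm_neg, norm_div, norm_mul, norm_pow, hce, mul_one, ← hr_def]
      have hmn : ‖(m : ℂ) + 1‖ = (m : ℝ) + 1 := by
        have : ((m : ℂ) + 1) = (((m + 1 : ℕ) : ℝ) : ℂ) := by push_cast; ring
        rw [this, Complex.norm_real, Real.norm_eq_abs, abs_of_nonneg (by positivity)]
        push_cast; ring
      rw [hmn]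
    rw [hnorm]
    have hstep1 : ((m:ℝ) + 1) * r ^ (m + 1) *
        ‖P.eval (G w) - a * (G w) ^ (m + 2)‖ / ‖G w‖ ^ (m + 2) ≤
        ((m:ℝ) + 1) * r ^ (m + 1) * (C₀ * ‖G w‖ ^ (m + 1)) / ‖G w‖ ^ (m + 2) := by
      gcongr
    have hstep2 : ((m:ℝ) + 1) * r ^ (m + 1) * (C₀ * ‖G w‖ ^ (m + 1)) / ‖G w‖ ^ (m + 2)
        = ((m:ℝ) + 1) * r ^ (m + 1) * C₀ / ‖G w‖ := by
      rw [show ‖G w‖^(m+2) = ‖G w‖ * ‖G w‖^(m+1) from by rw [pow_succ]; ring,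
        show ((m:ℝ)+1) * r ^ (m+1) * (C₀ * ‖G w‖^(m+1)) =
          ((m:ℝ)+1) * r ^ (m+1) * C₀ * ‖G w‖^(m+1) from by ring,
        mul_div_mul_right _ _ (pow_ne_zero (m+1) hgpos.ne')]
    have hstep3 : ((m:ℝ) + 1) * r ^ (m + 1) * C₀ / ‖G w‖ ≤
        ((m:ℝ) + 1) * r ^ (m + 1) * C₀ * 2 / r := by
      rw [div_le_div_iff₀ hgpos hr0]
      nlinarith [mul_nonneg (mul_nonneg (by positivity : (0:ℝ) ≤ ((m:ℝ)+1) * r ^ (m+1)) hC₀) hgpos.le,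
        mul_nonneg (mul_nonneg (by positivity : (0:ℝ) ≤ ((m:ℝ)+1) * r ^ (m+1)) hC₀) hr0.le]
    have hfinal : ((m:ℝ) + 1) * r ^ (m + 1) * C₀ * 2 / r ≤ 2/3 * δ * μ := by
      rw [hδ_def, hμ_def, div_le_iff₀ hr0]
      have hKr : ((m:ℝ)+1) * r ^ (m+1) * C₀ ≤ ((m:ℝ)+1) * r ^ (m+1) * (‖a‖ * K) := by
        gcongr
      have hexpand : 2/3 * (3 * K / r) * (((m:ℝ) + 1) * (‖a‖ * r ^ (m + 1))) * r
          = 2 * (((m:ℝ)+1) * r ^ (m+1) * (‖a‖ * K)) := by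
        field_simp
      rw [hexpand]
      linarith
    linarith
  set g : ℝ → ℂ := fun s => G s with hg_def
  have hgc : Continuous g := hGc.comp Complex.continuous_ofReal
  set v : ℝ → ℂ := fun s => V s with hv_def
  have hv0 : v 0 = 1 := by
    rw [hv_def]
    simpa using hV0
  have hvD : ∀ s : ℝ, g s ≠ 0 → HasDerivAt v (DD s) s := by
    intro s hgs
    exact (hVD s hgs).comp_ofReal
  set s₁ := (1 - η) / μ with hs₁_def
  have hs₁0 : 0 < s₁ := div_pos (by linarith) hμ0
  have hμs₁ : μ * s₁ = 1 - η := by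
    rw [hs₁_def]; field_simp
  have hg0 : g 0 = z₁ := by
    rw [hg_def]; simpa using hG0
  have hvu : ∀ s : ℝ, v s = z₁ ^ (m+1) / (g s) ^ (m+1) + ((μ * s : ℝ) : ℂ) := by
    intro s
    rw [hv_def, hV_def, hg_def]
    push_cast
    ring
  set S := {s : ℝ | s ∈ Set.Icc 0 s₁ ∧ ∀ σ ∈ Set.Icc 0 s,
      ‖v σ - 1‖ ≤ δ * (μ * σ) ∧ r / 2 ≤ ‖g σ‖} with hS_def
  have h0S : (0:ℝ) ∈ S := by
    refine ⟨⟨le_refl 0, hs₁0.le⟩, fun σ hσ => ?_⟩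
    have hσ0 : σ = 0 := le_antisymm hσ.2 hσ.1
    subst hσ0
    constructor
    · simp [hv0]
    · rw [hg0]; rw [← hr_def]; linarith
  have hSne : S.Nonempty := ⟨0, h0S⟩
  have hSbdd : BddAbove S := ⟨s₁, fun s hs => hs.1.2⟩
  set s' := sSup S with hs'_def
  have hs'0 : 0 ≤ s' := le_csSup hSbdd h0S
  have hs's₁ : s' ≤ s₁ := csSup_le hSne fun s hs => hs.1.2
  have hA : ∀ σ : ℝ, 0 ≤ σ → σ < s' →
      ‖v σ - 1‖ ≤ δ * (μ * σ) ∧ r / 2 ≤ ‖g σ‖ := by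
    intro σ h0 hlt
    obtain ⟨s, hsS, hlt2⟩ := exists_lt_of_lt_csSup hSne hlt
    exact hsS.2 σ ⟨h0, hlt2.le⟩
  have hs'S : s' ∈ S := by
    rcases eq_or_lt_of_le hs'0 with heq | hpos
    · rw [← heq]; exact h0S
    · have hclos : s' ∈ closure (Set.Ico 0 s') := by
        rw [closure_Ico hpos.ne]
        exact ⟨hs'0, le_refl s'⟩
      have hnb : (𝓝[Set.Ico 0 s'] s').NeBot :=
        mem_closure_iff_nhdsWithin_neBot.mp hclos
      have hgs' : r / 2 ≤ ‖g s'‖ := by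
        refine ge_of_tendsto (hgc.norm.continuousAt.continuousWithinAt (s := Set.Ico 0 s')) ?_
        filter_upwards [self_mem_nhdsWithin] with σ hσ
        exact (hA σ hσ.1 hσ.2).2
      have hgs'0 : g s' ≠ 0 := by
        intro h; rw [h] at hgs'; simp at hgs'; linarith
      have hvcont : ContinuousAt v s' := by
        have hucont : ContinuousAt (fun s : ℝ => z₁ ^ (m+1) / (g s) ^ (m+1)) s' := by
          apply ContinuousAt.div continuousAt_const
          · exact ((hgc.pow (m+1)).continuousAt)
          · exact pow_ne_zero _ hgs'0
        have : ContinuousAt (fun s : ℝ => z₁ ^ (m+1) / (g s) ^ (m+1) + ((μ * s : ℝ) : ℂ)) s' := by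
          apply hucont.add
          exact (Complex.continuous_ofReal.comp (continuous_const.mul continuous_id)).continuousAt
        have heq : (fun s : ℝ => z₁ ^ (m+1) / (g s) ^ (m+1) + ((μ * s : ℝ) : ℂ)) = v := by
          funext s; rw [hvu s]
        rwa [heq] at this
      have hvs' : ‖v s' - 1‖ ≤ δ * (μ * s') := by
        have hF : ContinuousAt (fun σ => δ * (μ * σ) - ‖v σ - 1‖) s' := by
          apply ContinuousAt.sub
          · exact (continuous_const.mul (continuous_const.mul continuous_id)).continuousAt
          · exact (hvcont.sub continuousAt_const).norm
        have h0F : ∀ᶠ σ in 𝓝[Set.Ico 0 s'] s', 0 ≤ δ * (μ * σ) - ‖v σ - 1‖ := by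
          filter_upwards [self_mem_nhdsWithin] with σ hσ
          linarith [(hA σ hσ.1 hσ.2).1]
        have h9 := ge_of_tendsto (hF.continuousWithinAt (s := Set.Ico 0 s')) h0F
        simp only at h9
        linarith
      refine ⟨⟨hs'0, hs's₁⟩, fun σ hσ => ?_⟩
      rcases lt_or_eq_of_le hσ.2 with hlt | heq2
      · exact hA σ hσ.1 hlt
      · rw [heq2]; exact ⟨hvs', hgs'⟩
  have hreg23 : ∀ σ ∈ Set.Icc (0:ℝ) s', 2 * r / 3 ≤ ‖g σ‖ := by
    intro σ hσ
    obtain ⟨hbd, hreg⟩ := hs'S.2 σ hσ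
    have hgσ0 : g σ ≠ 0 := by
      intro h; rw [h] at hreg; simp at hreg; linarith
    have hμσ : μ * σ ≤ 1 - η := by
      rw [← hμs₁]
      exact mul_le_mul_of_nonneg_left (hσ.2.trans hs's₁) hμ0.le
    have hμσ0 : 0 ≤ μ * σ := mul_nonneg hμ0.le hσ.1
    have hu32 : ‖z₁ ^ (m+1) / (g σ) ^ (m+1)‖ ≤ 3 / 2 := by
      have h1 : z₁ ^ (m+1) / (g σ) ^ (m+1) = (v σ - 1) + ((1 - μ * σ : ℝ) : ℂ) := by
        rw [hvu σ]; push_cast; ring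
      rw [h1]
      refine (norm_add_le _ _).trans ?_
      have h2 : ‖((1 - μ * σ : ℝ) : ℂ)‖ = 1 - μ * σ := by
        rw [Complex.norm_real, Real.norm_eq_abs, abs_of_nonneg (by linarith)]
      rw [h2]
      have h3 : δ * (μ * σ) ≤ δ := by nlinarith
      have h4 : δ ≤ 1/4 := hδη.trans hη4
      linarith
    have hun : ‖z₁ ^ (m+1) / (g σ) ^ (m+1)‖ = r ^ (m+1) / ‖g σ‖ ^ (m+1) := by
      rw [norm_div, norm_pow, norm_pow, ← hr_def]
    rw [hun] at hu32
    have hgpow : r ^ (m+1) ≤ 3/2 * ‖g σ‖ ^ (m+1) := by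
      rw [div_le_iff₀ (pow_pos (norm_pos_iff.mpr hgσ0) (m+1))] at hu32
      linarith
    by_contra hcon
    push_neg at hcon
    have h4 : ‖g σ‖ ^ (m+1) < (2 * r / 3) ^ (m+1) :=
      pow_lt_pow_left₀ hcon (norm_nonneg _) (by omega)
    have h5 : (2 * r / 3) ^ (m+1) ≤ 2/3 * r ^ (m+1) := by
      have h5a : (2 * r / 3) ^ (m+1) = (2/3) ^ (m+1) * r ^ (m+1) := by
        rw [← mul_pow]; ring_nf
      rw [h5a]
      have h6 : ((2:ℝ)/3) ^ (m+1) ≤ (2/3) ^ 1 :=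
        pow_le_pow_of_le_one (by norm_num) (by norm_num) (by omega)
      nlinarith [pow_pos hr0 (m+1)]
    nlinarith [pow_pos hr0 (m+1)]
  have hs'eq : s' = s₁ := by
    by_contra hne
    have hlt : s' < s₁ := lt_of_le_of_ne hs's₁ hne
    have hgs23 : 2 * r / 3 ≤ ‖g s'‖ := hreg23 s' ⟨hs'0, le_refl s'⟩
    obtain ⟨η₀, hη₀0, hη₀⟩ := Metric.continuousAt_iff.mp hgc.continuousAt (r/6) (by linarith)
    set ε' := min (η₀ / 2) (s₁ - s') with hε'_def
    have hε'0 : 0 < ε' := lt_min (by linarith) (by linarith)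
    have hJg : ∀ σ ∈ Set.Icc (0:ℝ) (s' + ε'), r / 2 ≤ ‖g σ‖ := by
      intro σ hσ
      rcases le_or_gt σ s' with h | h
      · exact (hs'S.2 σ ⟨hσ.1, h⟩).2
      · have hd : dist σ s' < η₀ := by
          rw [Real.dist_eq, abs_of_pos (sub_pos.2 h)]
          have h1 : σ ≤ s' + ε' := hσ.2
          have h2 : ε' ≤ η₀ / 2 := min_le_left _ _
          linarith
        have h3 := hη₀ hd
        rw [dist_eq_norm] at h3
        have h4 := norm_sub_norm_le (g σ) (g s')
        have h5 : ‖g σ‖ - ‖g s'‖ ≤ ‖g σ - g s'‖ ∧ ‖g s'‖ - ‖g σ‖ ≤ ‖g σ - g s'‖ := by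
          constructor
          · exact norm_sub_norm_le _ _
          · rw [norm_sub_rev (g σ)]; exact norm_sub_norm_le _ _
        linarith [h5.2]
    have hJs₁ : s' + ε' ≤ s₁ := by
      have : ε' ≤ s₁ - s' := min_le_right _ _
      linarith
    have hmvt : ∀ s_ ∈ Set.Icc (0:ℝ) (s' + ε'),
        ‖v s_ - v 0‖ ≤ 2/3 * δ * μ * ‖s_ - 0‖ := by
      intro s_ hs_
      refine (convex_Icc 0 (s' + ε')).norm_image_sub_le_of_norm_hasDerivWithin_le
        (f' := fun σ : ℝ => DD σ) (fun σ hσ => ?_) (fun σ hσ => hDbound σ (hJg σ hσ))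
        ⟨le_refl 0, by linarith⟩ hs_
      have hgσ0 : g σ ≠ 0 := by
        intro h
        have := hJg σ hσ
        rw [h] at this; simp at this; linarith
      exact (hvD σ hgσ0).hasDerivWithinAt
    have hnew : s' + ε' ∈ S := by
      refine ⟨⟨by linarith, hJs₁⟩, fun σ hσ => ⟨?_, hJg σ hσ⟩⟩
      have h1 := hmvt σ hσ
      rw [hv0, sub_zero, Real.norm_eq_abs, abs_of_nonneg hσ.1] at h1
      calc ‖v σ - 1‖ ≤ 2/3 * δ * μ * σ := h1
        _ ≤ δ * (μ * σ) := by nlinarith [mul_nonneg hμ0.le hσ.1]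
    have := le_csSup hSbdd hnew
    linarith
  obtain ⟨hbd₁, hreg₁⟩ := hs'S.2 s₁ ⟨hs₁0.le, hs'eq.ge⟩
  have hgs₁0 : g s₁ ≠ 0 := by
    intro h; rw [h] at hreg₁; simp at hreg₁; linarith
  have hu₁ : ‖z₁ ^ (m+1) / (g s₁) ^ (m+1)‖ ≤ 2 * η := by
    have h1 : z₁ ^ (m+1) / (g s₁) ^ (m+1) = (v s₁ - 1) + ((1 - μ * s₁ : ℝ) : ℂ) := by
      rw [hvu s₁]; push_cast; ring
    rw [h1]
    refine (norm_add_le _ _).trans ?_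
    rw [hμs₁]
    have h2 : ‖((1 - (1 - η) : ℝ) : ℂ)‖ = η := by
      rw [Complex.norm_real, Real.norm_eq_abs]
      simp [abs_of_nonneg hη0.le]
    rw [h2]
    have h3 : δ * (μ * s₁) ≤ η := by
      rw [hμs₁]
      nlinarith
    linarith
  have hg₁ : 2 * r ≤ ‖g s₁‖ := by
    have hun : ‖z₁ ^ (m+1) / (g s₁) ^ (m+1)‖ = r ^ (m+1) / ‖g s₁‖ ^ (m+1) := by
      rw [norm_div, norm_pow, norm_pow, ← hr_def]
    rw [hun] at hu₁
    have h2η : 2 * η = ((1:ℝ)/2) ^ (m+1) := by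
      rw [hη_def, pow_succ]; ring
    rw [h2η] at hu₁
    have hgpos : (0:ℝ) < ‖g s₁‖ := by
      rcases eq_or_lt_of_le (norm_nonneg (g s₁)) with h | h
      · exact absurd h.symm (norm_ne_zero_iff.mpr hgs₁0)
      · exact h
    have h1 : r ^ (m+1) ≤ ((1:ℝ)/2) ^ (m+1) * ‖g s₁‖ ^ (m+1) := by
      rw [div_le_iff₀ (pow_pos hgpos (m+1))] at hu₁
      linarith
    have h2 : (2 * r) ^ (m+1) ≤ ‖g s₁‖ ^ (m+1) := by
      rw [mul_pow]
      have h3 : ((1:ℝ)/2) ^ (m+1) * ‖g s₁‖ ^ (m+1) = ‖g s₁‖ ^ (m+1) / 2 ^ (m+1) := by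
        rw [div_pow]; ring
      rw [h3] at h1
      rw [le_div_iff₀ (by positivity : (0:ℝ) < 2 ^ (m+1))] at h1
      calc (2:ℝ) ^ (m+1) * r ^ (m+1) = r ^ (m+1) * 2 ^ (m+1) := by ring
        _ ≤ ‖g s₁‖ ^ (m+1) := h1
    exact le_of_pow_le_pow_left₀ (by omega) (norm_nonneg _) h2
  refine ⟨t₀ + (s₁ : ℂ) * e, ?_, ?_⟩
  · have h1 : ‖t₀ + (s₁ : ℂ) * e - t₀‖ = s₁ := by
      simp [norm_mul, hce, Complex.norm_real, abs_of_nonneg hs₁0.le]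
    rw [h1]
    have h2 : s₁ ≤ 1 / μ := by
      rw [hs₁_def]
      gcongr <;> linarith
    have h3 : ‖a‖ * r ≤ μ := by
      rw [hμ_def]
      have h4 : r ≤ r ^ (m+1) := by
        calc r = r ^ 1 := (pow_one r).symm
          _ ≤ r ^ (m+1) := pow_le_pow_right₀ hr1 (by omega)
      have hm0 : (0:ℝ) ≤ (m:ℝ) := Nat.cast_nonneg m
      have h5 : ‖a‖ * r ≤ ‖a‖ * r ^ (m+1) := mul_le_mul_of_nonneg_left h4 han.le
      nlinarith [mul_nonneg (mul_nonneg hm0 han.le) (pow_nonneg hr0.le (m+1))]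
    have h4 : 1 / μ ≤ 1 / (‖a‖ * r) := by
      apply one_div_le_one_div_of_le (by positivity) h3
    linarith
  · have hG1 : γ (t₀ + (s₁ : ℂ) * e) = g s₁ := by rw [hg_def, hG_def]
    rw [hG1]
    exact hg₁

/-- A polynomial vector field X = P(z)∂/∂z on ℂ is complete (every complex-time
trajectory is defined for all time and every initial condition) if and only if
deg P ≤ 1. -/
theorem polynomial_vf_complete_iff_deg_le_one (P : Polynomial ℂ) :
    (∀ z₀ : ℂ, ∃ γ : ℂ → ℂ, γ 0 = z₀ ∧
      ∀ t : ℂ, HasDerivAt γ (P.eval (γ t)) t) ↔ P.degree ≤ 1 := by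
  constructor
  · intro hc
    by_contra hdeg
    have hnd : 2 ≤ P.natDegree := by
      by_contra hn
      push_neg at hn
      have h1 : P.natDegree ≤ 1 := by omega
      exact hdeg (Polynomial.degree_le_natDegree.trans (by exact_mod_cast h1))
    obtain ⟨m, hm⟩ : ∃ m, P.natDegree = m + 2 := ⟨P.natDegree - 2, by omega⟩
    obtain ⟨C₀, hC₀, htail⟩ := tail_bound P m hm
    set a := P.leadingCoeff with ha_def
    have hP0 : P ≠ 0 := fun h => by rw [h] at hm; simp at hm
    have han : 0 < ‖a‖ := norm_pos_iff.mpr (Polynomial.leadingCoeff_ne_zero.mpr hP0)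
    set R := 30 * (C₀ / ‖a‖ + 1) * 2 ^ (m + 2) + 2 with hR_def
    have hR2 : 2 ≤ R := by
      have h0 : 0 ≤ C₀ / ‖a‖ := div_nonneg hC₀ han.le
      have h2 : (1:ℝ) ≤ 2 ^ (m+2) := one_le_pow₀ one_le_two
      rw [hR_def]
      nlinarith [mul_nonneg (by linarith : (0:ℝ) ≤ 30*(C₀/‖a‖+1)) (by linarith : (0:ℝ) ≤ (2:ℝ)^(m+2))]
    have hR0 : 0 < R := by linarith
    obtain ⟨γ, hγ0, hγ⟩ := hc (R : ℂ)
    have hstep : ∀ t₀ : ℂ, R ≤ ‖γ t₀‖ →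
        ∃ t₁ : ℂ, ‖t₁ - t₀‖ ≤ 1 / (‖a‖ * ‖γ t₀‖) ∧ 2 * ‖γ t₀‖ ≤ ‖γ t₁‖ :=
      fun t₀ ht₀ => step_lemma P m hm C₀ hC₀ htail γ hγ t₀ ht₀
    have h0R : R ≤ ‖γ 0‖ := by
      rw [hγ0, Complex.norm_real, Real.norm_eq_abs, abs_of_nonneg hR0.le]
    let T := {t : ℂ // R ≤ ‖γ t‖}
    let F : T → T := fun t => ⟨Classical.choose (hstep t.1 t.2), by
      have h := (Classical.choose_spec (hstep t.1 t.2)).2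
      have h2 : R ≤ 2 * ‖γ t.1‖ := by linarith [t.2, norm_nonneg (γ t.1)]
      exact le_trans h2 h⟩
    let seq : ℕ → T := fun n => F^[n] ⟨0, h0R⟩
    have hseq_succ : ∀ n, seq (n+1) = F (seq n) := fun n => Function.iterate_succ_apply' F n _
    have hseqF : ∀ n, (F (seq n)).1 = Classical.choose (hstep (seq n).1 (seq n).2) := fun n => rfl
    have hinv : ∀ n, 2 ^ n * R ≤ ‖γ (seq n).1‖ ∧
        ‖(seq (n+1)).1 - (seq n).1‖ ≤ 1 / (‖a‖ * (2 ^ n * R)) := by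
      intro n
      induction n with
      | zero =>
        refine ⟨by simpa [seq] using h0R, ?_⟩
        rw [hseq_succ 0, hseqF 0]
        have h := (Classical.choose_spec (hstep (seq 0).1 (seq 0).2)).1
        refine h.trans ?_
        apply one_div_le_one_div_of_le (by positivity)
        simp only [pow_zero, one_mul]
        exact mul_le_mul_of_nonneg_left (seq 0).2 han.le
      | succ n ih =>
        have hgrow := (Classical.choose_spec (hstep (seq n).1 (seq n).2)).2
        have hn1 : 2 ^ (n+1) * R ≤ ‖γ (seq (n+1)).1‖ := by
          rw [hseq_succ n, hseqF n]
          calc (2:ℝ)^(n+1) * R = 2 * (2^n * R) := by ring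
            _ ≤ 2 * ‖γ (seq n).1‖ := by nlinarith [ih.1]
            _ ≤ ‖γ (Classical.choose (hstep (seq n).1 (seq n).2))‖ := hgrow
        refine ⟨hn1, ?_⟩
        rw [hseq_succ (n+1), hseqF (n+1)]
        have h := (Classical.choose_spec (hstep (seq (n+1)).1 (seq (n+1)).2)).1
        refine h.trans ?_
        apply one_div_le_one_div_of_le (by positivity)
        exact mul_le_mul_of_nonneg_left hn1 han.le
    have hpos_bound : ∀ n, ‖(seq n).1‖ ≤ (2 - 2 * (1/2) ^ n) / (‖a‖ * R) := by
      intro n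
      induction n with
      | zero => simp [seq]
      | succ n ih =>
        have h1 := (hinv n).2
        have h2 : ‖(seq (n+1)).1‖ ≤ ‖(seq n).1‖ + ‖(seq (n+1)).1 - (seq n).1‖ := by
          have h3 := norm_add_le ((seq n).1) ((seq (n+1)).1 - (seq n).1)
          simpa using h3
        have h3 : 1 / (‖a‖ * (2^n * R)) = (1/2)^n / (‖a‖ * R) := by
          rw [div_pow]
          field_simp
          ring
        rw [h3] at h1
        have h4 : (2 - 2 * (1/2) ^ (n+1)) / (‖a‖ * R)
            = (2 - 2 * (1/2) ^ n) / (‖a‖ * R) + (1/2)^n / (‖a‖ * R) := by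
          rw [← add_div]
          congr 1
          rw [pow_succ]
          ring
        rw [h4]
        linarith
    have hM : ∀ n, ‖(seq n).1‖ ≤ 2 / (‖a‖ * R) := by
      intro n
      refine (hpos_bound n).trans ?_
      have h0 : (0:ℝ) ≤ (1/2)^n := by positivity
      exact div_le_div_of_nonneg_right (by linarith) (by positivity)
    have hcont : Continuous γ :=
      continuous_iff_continuousAt.mpr fun t => (hγ t).differentiableAt.continuousAt
    obtain ⟨B, hB⟩ := (isCompact_closedBall (0:ℂ)
      (2/(‖a‖*R))).exists_bound_of_continuousOn hcont.continuousOn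
    obtain ⟨n, hn⟩ := pow_unbounded_of_one_lt (B / R) (one_lt_two (α := ℝ))
    have h1 : ‖γ (seq n).1‖ ≤ B := by
      refine hB _ ?_
      simpa [Metric.mem_closedBall, dist_eq_norm] using hM n
    have h2 := (hinv n).1
    have h3 : B < 2^n * R := by
      rw [div_lt_iff₀ hR0] at hn
      linarith
    linarith
  · intro hdeg z₀
    have hP : P = Polynomial.C (P.coeff 1) * Polynomial.X + Polynomial.C (P.coeff 0) :=
      Polynomial.eq_X_add_C_of_degree_le_one hdeg
    set b := P.coeff 1
    set c := P.coeff 0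
    have heval : ∀ z : ℂ, P.eval z = b * z + c := by
      intro z; conv_lhs => rw [hP]
      simp
    by_cases hb : b = 0
    · refine ⟨fun t => z₀ + c * t, by simp, fun t => ?_⟩
      rw [heval, hb, zero_mul, zero_add]
      simpa using ((hasDerivAt_id t).const_mul c).const_add z₀
    · refine ⟨fun t => Complex.exp (b * t) * (z₀ + c / b) - c / b, by simp, fun t => ?_⟩
      have h1 : HasDerivAt (fun t : ℂ => Complex.exp (b * t)) (Complex.exp (b * t) * b) t := by
        simpa [mul_comm] using (((hasDerivAt_id t).const_mul b).cexp)
      have h2 := (h1.mul_const (z₀ + c / b)).sub_const (c / b)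
      convert h2 using 1
      · rfl
      · rfl
      rw [heval]
      field_simp
      ring
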